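/- For every integer k ≥ 3 and all distinct α, β ∈ {1,...,k+1}, there exists a (p,α)-CGC of G^5_k(p,q) in which q is colored with β, and there exists a (q,β)-CGC of G^5_k(p,q) in which p is colored with α. -/

import Mathlib

open SimpleGraph

/-- One step of the greedy coloring algorithm: color the vertex `w` with the smallest
positive integer not already used on one of its (already colored) neighbours.
Color `0` means "not yet colored". -/
noncomputable def greedyStep {V : Type*} [DecidableEq V] (G : SimpleGraph V)
    (f : V → ℕ) (w : V) : V → ℕ :=
  Function.update f w (sInf {n : ℕ | 0 < n ∧ ∀ z, G.Adj w z → f z ≠ n})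

/-- The coloring obtained by greedily coloring the vertices of the list `l` in order,
starting from the partial coloring `f₀`. -/
noncomputable def greedyFrom {V : Type*} [DecidableEq V] (G : SimpleGraph V)
    (f₀ : V → ℕ) (l : List V) : V → ℕ :=
  l.foldl (greedyStep G) f₀

/-- The greedy coloring of the ordering `l` (all vertices initially uncolored). -/
noncomputable def greedy {V : Type*} [DecidableEq V] (G : SimpleGraph V)
    (l : List V) : V → ℕ :=
  greedyFrom G (fun _ => 0) l

/-- `l` is a connected ordering of the vertices of `G`: it lists every vertex exactly once,
and every vertex other than the first has a neighbour occurring earlier in the list. -/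
def IsConnectedOrder {V : Type*} (G : SimpleGraph V) (l : List V) : Prop :=
  l.Nodup ∧ (∀ w : V, w ∈ l) ∧
    ∀ i : Fin l.length, 0 < (i : ℕ) →
      ∃ j : Fin l.length, (j : ℕ) < (i : ℕ) ∧ G.Adj (l.get i) (l.get j)

/-- `f` is a connected greedy coloring (CGC) of `G`. -/
def IsCGC {V : Type*} [DecidableEq V] (G : SimpleGraph V) (f : V → ℕ) : Prop :=
  ∃ l : List V, IsConnectedOrder G l ∧ f = greedy G l

/-- `f` is an `(x, α)`-connected greedy coloring of `G`: it is obtained from a connected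
ordering starting at `x` by coloring `x` with `α` and then coloring each subsequent
vertex with the smallest positive integer not appearing on its already-colored
neighbours. -/
def IsCGCFrom {V : Type*} [DecidableEq V] (G : SimpleGraph V) (x : V) (α : ℕ)
    (f : V → ℕ) : Prop :=
  ∃ l : List V, IsConnectedOrder G (x :: l) ∧
    f = greedyFrom G (Function.update (fun _ => 0) x α) l

/-- `f` uses exactly `k` colors. -/
def UsesColors {V : Type*} (f : V → ℕ) (k : ℕ) : Prop :=
  ∃ s : Finset ℕ, (∀ w, f w ∈ s) ∧ (∀ c ∈ s, ∃ w, f w = c) ∧ s.card = k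

/-- The connected chromatic number of `G`: the least `k` such that some connected greedy
coloring of `G` only uses colors in `{1, …, k}`. -/
noncomputable def connChrom {V : Type*} [DecidableEq V] (G : SimpleGraph V) : ℕ :=
  sInf {k | ∃ f, IsCGC G f ∧ ∀ w, f w ≤ k}

/-- The vertices of the gadget `G^5_k(p,q)`: the path `(p, x, y, z)`, a clique `P` of
size `k - 1`, a clique `Q` of size `k`, and the vertex `q`. -/
inductive G5Vert (k : ℕ) where
  | p : G5Vert k
  | x : G5Vert k
  | y : G5Vert k
  | z : G5Vert k
  | q : G5Vert k
  | P : Fin (k - 1) → G5Vert k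
  | Q : Fin k → G5Vert k
deriving DecidableEq

/-- The gadget `G^5_k(p,q)`: `(p, x, y, z)` is a path, `P` and `Q` are cliques,
each of `p, x, y, z` is complete to `P`, and each of `z, q` is complete to `Q`. -/
def G5 (k : ℕ) : SimpleGraph (G5Vert k) :=
  SimpleGraph.fromRel (fun a b =>
    (a = G5Vert.p ∧ b = G5Vert.x) ∨
    (a = G5Vert.x ∧ b = G5Vert.y) ∨
    (a = G5Vert.y ∧ b = G5Vert.z) ∨
    (∃ i j, a = G5Vert.P i ∧ b = G5Vert.P j) ∨
    (∃ i j, a = G5Vert.Q i ∧ b = G5Vert.Q j) ∨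
    (∃ i, (a = G5Vert.p ∨ a = G5Vert.x ∨ a = G5Vert.y ∨ a = G5Vert.z) ∧ b = G5Vert.P i) ∨
    (∃ i, (a = G5Vert.z ∨ a = G5Vert.q) ∧ b = G5Vert.Q i))

section Helpers
/- basic greedy lemmas -/
variable {V : Type*} [DecidableEq V] (G : SimpleGraph V)

lemma greedyFrom_nil (f : V → ℕ) : greedyFrom G f [] = f := rfl

lemma greedyFrom_cons (f : V → ℕ) (w : V) (l : List V) :
    greedyFrom G f (w :: l) = greedyFrom G (greedyStep G f w) l := rfl

lemma greedyFrom_append (f : V → ℕ) (l₁ l₂ : List V) :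
    greedyFrom G f (l₁ ++ l₂) = greedyFrom G (greedyFrom G f l₁) l₂ :=
  List.foldl_append

lemma greedyStep_ne (f : V → ℕ) {v w : V} (h : w ≠ v) : greedyStep G f v w = f w :=
  Function.update_of_ne h _ _

lemma greedyStep_self (f : V → ℕ) (w : V) :
    greedyStep G f w w = sInf {n : ℕ | 0 < n ∧ ∀ z, G.Adj w z → f z ≠ n} :=
  Function.update_self _ _ _

lemma greedyFrom_of_not_mem (f : V → ℕ) {w : V} {l : List V} (h : w ∉ l) :
    greedyFrom G f l w = f w := by
  induction l generalizing f with
  | nil => rfl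
  | cons a l ih =>
    rw [greedyFrom_cons, ih _ (fun hm => h (List.mem_cons_of_mem _ hm)),
      greedyStep_ne]
    intro he; exact h (by rw [he]; exact List.mem_cons_self)

def gfun (c i : ℕ) : ℕ := if i < c then i else i + 1

lemma gfun_pos {c i : ℕ} (h : 1 ≤ i) : 0 < gfun c i := by unfold gfun; split <;> omega
lemma gfun_ne {c i : ℕ} : gfun c i ≠ c := by unfold gfun; split <;> omega
lemma gfun_lt {c i j : ℕ} : gfun c i < gfun c j ↔ i < j := by unfold gfun; split <;> split <;> omega
lemma gfun_enum {c n j : ℕ} (hc : 1 ≤ c) (hn : 0 < n) (hnc : n ≠ c)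
    (hlt : n < gfun c (j + 1)) : ∃ i < j, n = gfun c (i + 1) := by
  refine ⟨(if n < c then n else n - 1) - 1, ?_, ?_⟩ <;> unfold gfun at * <;> split_ifs at * <;> omega

lemma natSInf_eq {S : Set ℕ} {c : ℕ} (h1 : c ∈ S) (h2 : ∀ n < c, n ∉ S) : sInf S = c := by
  refine le_antisymm (Nat.sInf_le h1) ?_
  by_contra h
  exact h2 _ (lt_of_not_ge h) (Nat.sInf_mem ⟨c, h1⟩)

/-- the index count of the first clique -/
def Mf (a b : ℕ) : ℕ := if b < a then b - 1 else b - 2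
/-- the color of the middle chain vertex -/
def cY (a b : ℕ) : ℕ := if b < a then b + 1 else a

lemma gfun_M {a b : ℕ} (ha : 1 ≤ a) (hb : 1 ≤ b) (hab : a ≠ b) : gfun a (Mf a b + 1) = b := by
  unfold gfun Mf; split_ifs <;> omega

lemma sInf_clique {a j : ℕ} (ha : 1 ≤ a) :
    sInf {n : ℕ | 0 < n ∧ n ≠ a ∧ ∀ i < j, n ≠ gfun a (i + 1)} = gfun a (j + 1) := by
  refine natSInf_eq ⟨gfun_pos (by omega), gfun_ne, fun i hi => (gfun_lt.2 (by omega)).ne'⟩ ?_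
  rintro n hlt ⟨hn, hna, hall⟩
  obtain ⟨i, hi, rfl⟩ := gfun_enum ha hn hna hlt
  exact hall i hi rfl

lemma sInf_y {a b : ℕ} (ha : 1 ≤ a) (hb : 1 ≤ b) (hab : a ≠ b) :
    sInf {n : ℕ | 0 < n ∧ n ≠ b ∧ ∀ i < Mf a b, n ≠ gfun a (i + 1)} = cY a b := by
  have hM := gfun_M ha hb hab
  refine natSInf_eq ⟨?_, ?_, ?_⟩ ?_
  · unfold cY; split <;> omega
  · unfold cY; split <;> omega
  · intro i hi h
    have h1 : gfun a (i + 1) < b := by rw [← hM]; exact gfun_lt.2 (by omega)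
    have h2 : gfun a (i + 1) ≠ a := gfun_ne
    unfold cY at h; split_ifs at h <;> omega
  · rintro n hlt ⟨hn, hnb, hall⟩
    have hna : n ≠ a := by unfold cY at hlt; split_ifs at hlt <;> omega
    have hb' : n < gfun a (Mf a b + 1) := by
      rw [hM]; unfold cY at hlt; split_ifs at hlt <;> omega
    obtain ⟨i, hi, rfl⟩ := gfun_enum ha hn hna hb'
    exact hall i hi rfl

lemma sInf_z {a b : ℕ} (ha : 1 ≤ a) (hb : 1 ≤ b) (hab : a ≠ b) :
    sInf {n : ℕ | 0 < n ∧ n ≠ cY a b ∧ ∀ i < Mf a b, n ≠ gfun a (i + 1)} = b := by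
  have hM := gfun_M ha hb hab
  refine natSInf_eq ⟨by omega, by unfold cY; split <;> omega, ?_⟩ ?_
  · intro i hi; rw [← hM]; exact ((gfun_lt.2 (by omega)).ne').symm.symm
  · rintro n hlt ⟨hn, hnc, hall⟩
    have hna : n ≠ a := by unfold cY at hnc; split_ifs at hnc <;> omega
    have hb' : n < gfun a (Mf a b + 1) := by rw [hM]; omega
    obtain ⟨i, hi, rfl⟩ := gfun_enum ha hn hna hb'
    exact hall i hi rfl

lemma sInf_q {b K : ℕ} (hb : 1 ≤ b) (hbK : b ≤ K + 1) :
    sInf {n : ℕ | 0 < n ∧ ∀ i < K, n ≠ gfun b (i + 1)} = b := by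
  refine natSInf_eq ⟨hb, fun i hi => (gfun_ne).symm⟩ ?_
  rintro n hlt ⟨hn, hall⟩
  have hnb : n ≠ b := by omega
  have hb' : n < gfun b (K + 1) := by unfold gfun; split <;> omega
  obtain ⟨i, hi, rfl⟩ := gfun_enum hb hn hnb hb'
  exact hall i hi rfl

lemma mem_take_finRange {n m : ℕ} (i : Fin n) : i ∈ (List.finRange n).take m ↔ (i : ℕ) < m := by
  rw [List.mem_take_iff_getElem]
  constructor
  · rintro ⟨j, hj, rfl⟩; simp at hj ⊢; omega
  · intro h; exact ⟨i, by simp; omega, by simp⟩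

lemma mem_drop_finRange {n m : ℕ} (i : Fin n) : i ∈ (List.finRange n).drop m ↔ m ≤ (i : ℕ) := by
  rw [List.mem_drop_iff_getElem]
  constructor
  · rintro ⟨j, hj, rfl⟩; simp
  · intro h
    refine ⟨(i : ℕ) - m, by simp; omega, ?_⟩
    simp only [List.getElem_drop, List.getElem_finRange]
    ext; simp; omega

lemma take_finRange_succ (n j : ℕ) (h : j < n) :
    (List.finRange n).take (j + 1) = (List.finRange n).take j ++ [⟨j, h⟩] := by
  rw [List.take_succ]
  have : (List.finRange n)[j]? = some ⟨j, h⟩ := by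
    rw [List.getElem?_eq_getElem (by simpa using h)]; simp
  simp [this]

lemma earlier_mem {V : Type*} {l l₁ l₂ : List V} (hnd : l.Nodup) (hsplit : l = l₁ ++ l₂)
    {u w : V} (hu : u ∈ l₁) (hw : w ∈ l₂) {i : Fin l.length} (hi : l.get i = w) :
    ∃ j : Fin l.length, (j : ℕ) < (i : ℕ) ∧ l.get j = u := by
  subst hsplit
  obtain ⟨j₀, hj₀, hj₀u⟩ := List.mem_iff_getElem.1 hu
  have hlen : j₀ < (l₁ ++ l₂).length := by simp; omega
  have hget : (l₁ ++ l₂).get ⟨j₀, hlen⟩ = u := by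
    simp only [List.get_eq_getElem, List.getElem_append_left hj₀]; exact hj₀u
  refine ⟨⟨j₀, hlen⟩, ?_, hget⟩
  by_contra hcon
  have hcon' : (i : ℕ) ≤ j₀ := by simpa using hcon
  have hile : (i : ℕ) < l₁.length := by omega
  have : (l₁ ++ l₂).get i ∈ l₁ := by
    simp only [List.get_eq_getElem, List.getElem_append_left hile]
    exact List.getElem_mem _
  rw [hi] at this
  exact List.disjoint_of_nodup_append hnd this hw
end Helpers

section G5lemmas
variable {k : ℕ}
open G5Vert

lemma adj_p (u : G5Vert k) : (G5 k).Adj .p u ↔ u = x ∨ ∃ i, u = P i := by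
  cases u <;> simp [G5] <;> tauto

lemma adj_x (u : G5Vert k) : (G5 k).Adj .x u ↔ u = p ∨ u = y ∨ ∃ i, u = P i := by
  cases u <;> simp [G5] <;> tauto

lemma adj_y (u : G5Vert k) : (G5 k).Adj .y u ↔ u = x ∨ u = z ∨ ∃ i, u = P i := by
  cases u <;> simp [G5] <;> tauto

lemma adj_z (u : G5Vert k) : (G5 k).Adj .z u ↔ u = y ∨ (∃ i, u = P i) ∨ ∃ i, u = Q i := by
  cases u <;> simp [G5] <;> tauto

lemma adj_q (u : G5Vert k) : (G5 k).Adj .q u ↔ ∃ i, u = Q i := by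
  cases u <;> simp [G5] <;> tauto

lemma adj_P (j : Fin (k-1)) (u : G5Vert k) :
    (G5 k).Adj (P j) u ↔ u = p ∨ u = x ∨ u = y ∨ u = z ∨ ∃ i, i ≠ j ∧ u = P i := by
  cases u <;> simp [G5] <;> aesop

lemma adj_Q (j : Fin k) (u : G5Vert k) :
    (G5 k).Adj (Q j) u ↔ u = z ∨ u = q ∨ ∃ i, i ≠ j ∧ u = Q i := by
  cases u <;> simp [G5] <;> aesop
open G5Vert in
lemma stepP (F : G5Vert k → ℕ) (w : G5Vert k) (c a mm : ℕ) (hmm : mm ≤ k - 1)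
    (hPadj : ∀ i : Fin (k-1), (G5 k).Adj w (.P i))
    (hothers : ∀ u, (G5 k).Adj w u → (∀ i, u ≠ .P i) → F u = 0 ∨ F u = c)
    (hcw : c = 0 ∨ ∃ u, (G5 k).Adj w u ∧ F u = c)
    (hFP : ∀ i : Fin (k-1), F (.P i) = if (i : ℕ) < mm then gfun a ((i : ℕ) + 1) else 0) :
    {n : ℕ | 0 < n ∧ ∀ u, (G5 k).Adj w u → F u ≠ n}
      = {n : ℕ | 0 < n ∧ n ≠ c ∧ ∀ i < mm, n ≠ gfun a (i + 1)} := by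
  ext n
  simp only [Set.mem_setOf_eq]
  constructor
  · rintro ⟨hn, hall⟩
    refine ⟨hn, ?_, ?_⟩
    · rcases hcw with rfl | ⟨u, hu, hFu⟩
      · omega
      · exact fun h => hall u hu (hFu.trans h.symm)
    · intro i hi h
      have hik : i < k - 1 := lt_of_lt_of_le hi hmm
      have := hall (.P ⟨i, hik⟩) (hPadj _)
      rw [hFP] at this
      simp only [hi, if_pos] at this
      exact this h.symm
  · rintro ⟨hn, hnc, hl⟩
    refine ⟨hn, ?_⟩
    intro u hu
    by_cases hP : ∀ i, u ≠ G5Vert.P i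
    · rcases hothers u hu hP with h0 | h0 <;> rw [h0]
      · omega
      · exact fun h => hnc h.symm
    · push_neg at hP
      obtain ⟨i, rfl⟩ := hP
      rw [hFP]
      split
      · exact fun h => hl _ (by omega) h.symm
      · omega

open G5Vert in
lemma stepQ (F : G5Vert k → ℕ) (w : G5Vert k) (b : ℕ)
    (hQadj : ∀ i : Fin k, (G5 k).Adj w (.Q i))
    (hothers : ∀ u, (G5 k).Adj w u → (∀ i, u ≠ .Q i) → F u = 0)
    (hFQ : ∀ i : Fin k, F (.Q i) = gfun b ((i : ℕ) + 1)) :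
    {n : ℕ | 0 < n ∧ ∀ u, (G5 k).Adj w u → F u ≠ n}
      = {n : ℕ | 0 < n ∧ ∀ i < k, n ≠ gfun b (i + 1)} := by
  ext n
  simp only [Set.mem_setOf_eq]
  constructor
  · rintro ⟨hn, hall⟩
    refine ⟨hn, fun i hi h => ?_⟩
    have := hall (.Q ⟨i, hi⟩) (hQadj _)
    rw [hFQ] at this
    exact this h.symm
  · rintro ⟨hn, hl⟩
    refine ⟨hn, ?_⟩
    intro u hu
    by_cases hQ : ∀ i, u ≠ G5Vert.Q i
    · rw [hothers u hu hQ]; omega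
    · push_neg at hQ
      obtain ⟨i, rfl⟩ := hQ
      rw [hFQ]
      exact fun h => hl _ i.2 h.symm

open G5Vert in
lemma Pclique (a : ℕ) (ha : 1 ≤ a) (f : G5Vert k → ℕ)
    (hax : ∀ n, 0 < n → ((f .p ≠ n ∧ f .x ≠ n ∧ f .y ≠ n ∧ f .z ≠ n) ↔ n ≠ a))
    (hP0 : ∀ i, f (.P i) = 0) :
    ∀ j, j ≤ k - 1 →
      (∀ i : Fin (k-1), greedyFrom (G5 k) f (((List.finRange (k-1)).take j).map .P) (.P i)
          = if (i : ℕ) < j then gfun a ((i : ℕ) + 1) else 0) ∧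
      (∀ w, (∀ i, w ≠ .P i) →
        greedyFrom (G5 k) f (((List.finRange (k-1)).take j).map .P) w = f w) := by
  intro j
  induction j with
  | zero =>
    intro _
    refine ⟨fun i => ?_, fun w _ => ?_⟩ <;> simp [greedyFrom_nil, hP0]
  | succ j ih =>
    intro hj
    have hjk : j < k - 1 := hj
    obtain ⟨ih1, ih2⟩ := ih (le_of_lt hjk)
    set R := greedyFrom (G5 k) f (((List.finRange (k-1)).take j).map .P) with hR
    have hp : R .p = f .p := ih2 _ (fun i => by simp)
    have hx : R .x = f .x := ih2 _ (fun i => by simp)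
    have hy : R .y = f .y := ih2 _ (fun i => by simp)
    have hz : R .z = f .z := ih2 _ (fun i => by simp)
    have hstep : greedyFrom (G5 k) f (((List.finRange (k-1)).take (j+1)).map .P)
        = greedyStep (G5 k) R (.P ⟨j, hjk⟩) := by
      rw [take_finRange_succ _ _ hjk, List.map_append, greedyFrom_append]
      rfl
    have hval : greedyStep (G5 k) R (.P ⟨j, hjk⟩) (.P ⟨j, hjk⟩) = gfun a (j + 1) := by
      rw [greedyStep_self]
      have hsets : {n : ℕ | 0 < n ∧ ∀ u, (G5 k).Adj (.P ⟨j, hjk⟩) u → R u ≠ n}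
          = {n : ℕ | 0 < n ∧ n ≠ a ∧ ∀ i < j, n ≠ gfun a (i + 1)} := by
        ext n
        simp only [Set.mem_setOf_eq]
        constructor
        · rintro ⟨hn, hall⟩
          refine ⟨hn, ?_, ?_⟩
          · refine (hax n hn).1 ⟨?_, ?_, ?_, ?_⟩
            · rw [← hp]; exact hall _ ((adj_P _ _).2 (Or.inl rfl))
            · rw [← hx]; exact hall _ ((adj_P _ _).2 (Or.inr (Or.inl rfl)))
            · rw [← hy]; exact hall _ ((adj_P _ _).2 (Or.inr (Or.inr (Or.inl rfl))))
            · rw [← hz]; exact hall _ ((adj_P _ _).2 (Or.inr (Or.inr (Or.inr (Or.inl rfl)))))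
          · intro i hi h
            have hik : i < k - 1 := lt_trans hi hjk
            have hne : (⟨i, hik⟩ : Fin (k-1)) ≠ ⟨j, hjk⟩ := by
              simp only [ne_eq, Fin.mk.injEq]; omega
            have := hall (.P ⟨i, hik⟩)
              ((adj_P _ _).2 (Or.inr (Or.inr (Or.inr (Or.inr ⟨⟨i, hik⟩, hne, rfl⟩)))))
            rw [ih1 ⟨i, hik⟩] at this
            simp only [hi, if_pos] at this
            exact this h.symm
        · rintro ⟨hn, hna, hl⟩
          refine ⟨hn, ?_⟩
          intro u hu
          obtain ⟨h1, h2, h3, h4⟩ := (hax n hn).2 hna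
          rw [adj_P] at hu
          rcases hu with rfl | rfl | rfl | rfl | ⟨i, hne, rfl⟩
          · rw [hp]; exact h1
          · rw [hx]; exact h2
          · rw [hy]; exact h3
          · rw [hz]; exact h4
          · rw [ih1 i]
            split
            · exact fun h => hl _ (by assumption) h.symm
            · omega
      rw [hsets]
      exact sInf_clique ha
    constructor
    · intro i
      rw [hstep]
      by_cases hij : i = ⟨j, hjk⟩
      · subst hij
        rw [hval]
        simp
      · have hne : (G5Vert.P i : G5Vert k) ≠ .P ⟨j, hjk⟩ := by
          simp only [ne_eq, G5Vert.P.injEq]; exact hij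
        rw [greedyStep_ne _ _ hne, ih1 i]
        have hvne : (i : ℕ) ≠ j := fun h => hij (Fin.ext h)
        split_ifs <;> first | rfl | omega
    · intro w hw
      rw [hstep, greedyStep_ne _ _ (hw _), ih2 w hw]

open G5Vert in
lemma Qclique (a : ℕ) (ha : 1 ≤ a) (f : G5Vert k → ℕ)
    (hax : ∀ n, 0 < n → ((f .z ≠ n ∧ f .q ≠ n) ↔ n ≠ a))
    (hQ0 : ∀ i, f (.Q i) = 0) :
    ∀ j, j ≤ k →
      (∀ i : Fin k, greedyFrom (G5 k) f (((List.finRange k).take j).map .Q) (.Q i)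
          = if (i : ℕ) < j then gfun a ((i : ℕ) + 1) else 0) ∧
      (∀ w, (∀ i, w ≠ .Q i) →
        greedyFrom (G5 k) f (((List.finRange k).take j).map .Q) w = f w) := by
  intro j
  induction j with
  | zero =>
    intro _
    refine ⟨fun i => ?_, fun w _ => ?_⟩ <;> simp [greedyFrom_nil, hQ0]
  | succ j ih =>
    intro hj
    have hjk : j < k := hj
    obtain ⟨ih1, ih2⟩ := ih (le_of_lt hjk)
    set R := greedyFrom (G5 k) f (((List.finRange k).take j).map .Q) with hR
    have hz : R .z = f .z := ih2 _ (fun i => by simp)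
    have hq : R .q = f .q := ih2 _ (fun i => by simp)
    have hstep : greedyFrom (G5 k) f (((List.finRange k).take (j+1)).map .Q)
        = greedyStep (G5 k) R (.Q ⟨j, hjk⟩) := by
      rw [take_finRange_succ _ _ hjk, List.map_append, greedyFrom_append]
      rfl
    have hval : greedyStep (G5 k) R (.Q ⟨j, hjk⟩) (.Q ⟨j, hjk⟩) = gfun a (j + 1) := by
      rw [greedyStep_self]
      have hsets : {n : ℕ | 0 < n ∧ ∀ u, (G5 k).Adj (.Q ⟨j, hjk⟩) u → R u ≠ n}
          = {n : ℕ | 0 < n ∧ n ≠ a ∧ ∀ i < j, n ≠ gfun a (i + 1)} := by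
        ext n
        simp only [Set.mem_setOf_eq]
        constructor
        · rintro ⟨hn, hall⟩
          refine ⟨hn, ?_, ?_⟩
          · refine (hax n hn).1 ⟨?_, ?_⟩
            · rw [← hz]; exact hall _ ((adj_Q _ _).2 (Or.inl rfl))
            · rw [← hq]; exact hall _ ((adj_Q _ _).2 (Or.inr (Or.inl rfl)))
          · intro i hi h
            have hik : i < k := lt_trans hi hjk
            have hne : (⟨i, hik⟩ : Fin k) ≠ ⟨j, hjk⟩ := by
              simp only [ne_eq, Fin.mk.injEq]; omega
            have := hall (.Q ⟨i, hik⟩)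
              ((adj_Q _ _).2 (Or.inr (Or.inr ⟨⟨i, hik⟩, hne, rfl⟩)))
            rw [ih1 ⟨i, hik⟩] at this
            simp only [hi, if_pos] at this
            exact this h.symm
        · rintro ⟨hn, hna, hl⟩
          refine ⟨hn, ?_⟩
          intro u hu
          obtain ⟨h1, h2⟩ := (hax n hn).2 hna
          rw [adj_Q] at hu
          rcases hu with rfl | rfl | ⟨i, hne, rfl⟩
          · rw [hz]; exact h1
          · rw [hq]; exact h2
          · rw [ih1 i]
            split
            · exact fun h => hl _ (by assumption) h.symm
            · omega
      rw [hsets]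
      exact sInf_clique ha
    constructor
    · intro i
      rw [hstep]
      by_cases hij : i = ⟨j, hjk⟩
      · subst hij
        rw [hval]
        simp
      · have hne : (G5Vert.Q i : G5Vert k) ≠ .Q ⟨j, hjk⟩ := by
          simp only [ne_eq, G5Vert.Q.injEq]; exact hij
        rw [greedyStep_ne _ _ hne, ih1 i]
        have hvne : (i : ℕ) ≠ j := fun h => hij (Fin.ext h)
        split_ifs <;> first | rfl | omega
    · intro w hw
      rw [hstep, greedyStep_ne _ _ (hw _), ih2 w hw]

end G5lemmas

lemma greedyFrom_singleton {V : Type*} [DecidableEq V] (G : SimpleGraph V) (f : V → ℕ) (w : V) :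
    greedyFrom G f [w] = greedyStep G f w := rfl

lemma greedyFrom_triple {V : Type*} [DecidableEq V] (G : SimpleGraph V) (f : V → ℕ) (a b c : V) :
    greedyFrom G f [a, b, c] = greedyStep G (greedyStep G (greedyStep G f a) b) c := rfl

open G5Vert in
lemma part1_val (k α β : ℕ) (hk : 3 ≤ k) (hα1 : 1 ≤ α) (hαk : α ≤ k + 1)
    (hβ1 : 1 ≤ β) (hβk : β ≤ k + 1) (hαβ : α ≠ β) :
    greedyFrom (G5 k) (Function.update (fun _ => 0) G5Vert.p α)
      (((List.finRange (k-1)).take (Mf α β)).map G5Vert.P ++ [G5Vert.x, G5Vert.y, G5Vert.z]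
        ++ ((List.finRange (k-1)).drop (Mf α β)).map G5Vert.P
        ++ (List.finRange k).map G5Vert.Q ++ [G5Vert.q]) G5Vert.q = β := by
  have hmk : Mf α β ≤ k - 1 := by unfold Mf; split <;> omega
  set m := Mf α β with hmdef
  set f₀ : G5Vert k → ℕ := Function.update (fun _ => 0) G5Vert.p α with hf₀def
  have hf₀p : f₀ G5Vert.p = α := Function.update_self _ _ _
  have hf₀n : ∀ w : G5Vert k, w ≠ G5Vert.p → f₀ w = 0 := fun w hw => Function.update_of_ne hw _ _
  -- the P clique
  obtain ⟨hP1, hP2⟩ := Pclique α hα1 f₀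
    (fun n hn => by
      rw [hf₀p, hf₀n G5Vert.x (by simp), hf₀n G5Vert.y (by simp), hf₀n G5Vert.z (by simp)]
      omega)
    (fun i => hf₀n _ (by simp)) m hmk
  rw [greedyFrom_append, greedyFrom_append, greedyFrom_append, greedyFrom_append,
    greedyFrom_singleton, greedyFrom_triple]
  set F1 := greedyFrom (G5 k) f₀ (((List.finRange (k-1)).take m).map G5Vert.P) with hF1def
  set F2 := greedyStep (G5 k) F1 G5Vert.x with hF2def
  set F3 := greedyStep (G5 k) F2 G5Vert.y with hF3def
  set F4 := greedyStep (G5 k) F3 G5Vert.z with hF4def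
  set FB := greedyFrom (G5 k) F4 (((List.finRange (k-1)).drop m).map G5Vert.P) with hFBdef
  set FQ := greedyFrom (G5 k) FB ((List.finRange k).map G5Vert.Q) with hFQdef
  -- values of F1
  have hF1p : F1 G5Vert.p = α := (hP2 _ (fun i => by simp)).trans hf₀p
  have hF1y : F1 G5Vert.y = 0 := (hP2 _ (fun i => by simp)).trans (hf₀n _ (by simp))
  have hF1z : F1 G5Vert.z = 0 := (hP2 _ (fun i => by simp)).trans (hf₀n _ (by simp))
  have hF1q : F1 G5Vert.q = 0 := (hP2 _ (fun i => by simp)).trans (hf₀n _ (by simp))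
  have hF1Q : ∀ i : Fin k, F1 (G5Vert.Q i) = 0 :=
    fun i => (hP2 _ (fun i' => by simp)).trans (hf₀n _ (by simp))
  -- step at x
  have hF2x : F2 G5Vert.x = β := by
    rw [hF2def, greedyStep_self,
      stepP F1 G5Vert.x α α m hmk
        (fun i => (adj_x _).2 (Or.inr (Or.inr ⟨i, rfl⟩)))
        (fun u hu hnP => by
          rw [adj_x] at hu
          rcases hu with rfl | rfl | ⟨i, rfl⟩
          · exact Or.inr hF1p
          · exact Or.inl hF1y
          · exact absurd rfl (hnP i))
        (Or.inr ⟨G5Vert.p, (adj_x _).2 (Or.inl rfl), hF1p⟩)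
        hP1,
      sInf_clique hα1, hmdef]
    exact gfun_M hα1 hβ1 hαβ
  have hF2ne : ∀ w : G5Vert k, w ≠ G5Vert.x → F2 w = F1 w :=
    fun w hw => greedyStep_ne _ _ hw
  have hF2P : ∀ i : Fin (k-1), F2 (G5Vert.P i)
      = if (i : ℕ) < m then gfun α ((i : ℕ) + 1) else 0 :=
    fun i => (hF2ne _ (by simp)).trans (hP1 i)
  -- step at y
  have hF3y : F3 G5Vert.y = cY α β := by
    rw [hF3def, greedyStep_self,
      stepP F2 G5Vert.y β α m hmk
        (fun i => (adj_y _).2 (Or.inr (Or.inr ⟨i, rfl⟩)))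
        (fun u hu hnP => by
          rw [adj_y] at hu
          rcases hu with rfl | rfl | ⟨i, rfl⟩
          · exact Or.inr hF2x
          · exact Or.inl ((hF2ne _ (by simp)).trans hF1z)
          · exact absurd rfl (hnP i))
        (Or.inr ⟨G5Vert.x, (adj_y _).2 (Or.inl rfl), hF2x⟩)
        hF2P,
      hmdef]
    exact sInf_y hα1 hβ1 hαβ
  have hF3ne : ∀ w : G5Vert k, w ≠ G5Vert.y → F3 w = F2 w :=
    fun w hw => greedyStep_ne _ _ hw
  have hF3P : ∀ i : Fin (k-1), F3 (G5Vert.P i)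
      = if (i : ℕ) < m then gfun α ((i : ℕ) + 1) else 0 :=
    fun i => (hF3ne _ (by simp)).trans (hF2P i)
  -- step at z
  have hF4z : F4 G5Vert.z = β := by
    rw [hF4def, greedyStep_self,
      stepP F3 G5Vert.z (cY α β) α m hmk
        (fun i => (adj_z _).2 (Or.inr (Or.inl ⟨i, rfl⟩)))
        (fun u hu hnP => by
          rw [adj_z] at hu
          rcases hu with rfl | ⟨i, rfl⟩ | ⟨i, rfl⟩
          · exact Or.inr hF3y
          · exact absurd rfl (hnP i)
          · exact Or.inl ((hF3ne _ (by simp)).trans ((hF2ne _ (by simp)).trans (hF1Q i))))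
        (Or.inr ⟨G5Vert.y, (adj_z _).2 (Or.inl rfl), hF3y⟩)
        hF3P,
      hmdef]
    exact sInf_z hα1 hβ1 hαβ
  have hF4ne : ∀ w : G5Vert k, w ≠ G5Vert.z → F4 w = F3 w :=
    fun w hw => greedyStep_ne _ _ hw
  -- the PB segment does not touch z, q, Q
  have hFBz : FB G5Vert.z = β := by
    rw [hFBdef, greedyFrom_of_not_mem _ _ (by intro h; obtain ⟨i, -, hi⟩ := List.mem_map.1 h; simp at hi), hF4z]
  have hFBq : FB G5Vert.q = 0 := by
    rw [hFBdef, greedyFrom_of_not_mem _ _ (by intro h; obtain ⟨i, -, hi⟩ := List.mem_map.1 h; simp at hi), hF4ne _ (by simp),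
      hF3ne _ (by simp), hF2ne _ (by simp), hF1q]
  have hFBQ : ∀ i : Fin k, FB (G5Vert.Q i) = 0 := fun i => by
    rw [hFBdef, greedyFrom_of_not_mem _ _ (by intro h; obtain ⟨i, -, hi⟩ := List.mem_map.1 h; simp at hi), hF4ne _ (by simp),
      hF3ne _ (by simp), hF2ne _ (by simp), hF1Q]
  -- the Q clique
  obtain ⟨hQ1, hQ2⟩ := Qclique β hβ1 FB
    (fun n hn => by rw [hFBz, hFBq]; omega) hFBQ k le_rfl
  rw [List.take_of_length_le (by simp)] at hQ1
  have hFQQ : ∀ i : Fin k, FQ (G5Vert.Q i) = gfun β ((i : ℕ) + 1) := fun i => by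
    rw [hFQdef, hQ1 i, if_pos i.2]
  -- the final step at q
  rw [greedyStep_self,
    stepQ FQ G5Vert.q β
      (fun i => (adj_q _).2 ⟨i, rfl⟩)
      (fun u hu hnQ => by
        rw [adj_q] at hu
        obtain ⟨i, rfl⟩ := hu
        exact absurd rfl (hnQ i))
      hFQQ]
  exact sInf_q hβ1 hβk

open G5Vert in
lemma part2_val (k α β : ℕ) (hk : 3 ≤ k) (hα1 : 1 ≤ α) (hαk : α ≤ k + 1)
    (hβ1 : 1 ≤ β) (hβk : β ≤ k + 1) (hαβ : α ≠ β) :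
    greedyFrom (G5 k) (Function.update (fun _ => 0) G5Vert.q β)
      ((List.finRange k).map G5Vert.Q ++ [G5Vert.z]
        ++ ((List.finRange (k-1)).take (Mf β α)).map G5Vert.P ++ [G5Vert.y, G5Vert.x, G5Vert.p]
        ++ ((List.finRange (k-1)).drop (Mf β α)).map G5Vert.P) G5Vert.p = α := by
  have hmk : Mf β α ≤ k - 1 := by unfold Mf; split <;> omega
  set m := Mf β α with hmdef
  set f₀ : G5Vert k → ℕ := Function.update (fun _ => 0) G5Vert.q β with hf₀def
  have hf₀q : f₀ G5Vert.q = β := Function.update_self _ _ _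
  have hf₀n : ∀ w : G5Vert k, w ≠ G5Vert.q → f₀ w = 0 := fun w hw => Function.update_of_ne hw _ _
  -- the Q clique
  obtain ⟨hQ1, hQ2⟩ := Qclique β hβ1 f₀
    (fun n hn => by rw [hf₀q, hf₀n G5Vert.z (by simp)]; omega)
    (fun i => hf₀n _ (by simp)) k le_rfl
  rw [List.take_of_length_le (by simp)] at hQ1 hQ2
  rw [greedyFrom_append, greedyFrom_append, greedyFrom_append, greedyFrom_append,
    greedyFrom_singleton, greedyFrom_triple]
  set G1 := greedyFrom (G5 k) f₀ ((List.finRange k).map G5Vert.Q) with hG1def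
  set G2 := greedyStep (G5 k) G1 G5Vert.z with hG2def
  set G3 := greedyFrom (G5 k) G2 (((List.finRange (k-1)).take m).map G5Vert.P) with hG3def
  set G4 := greedyStep (G5 k) G3 G5Vert.y with hG4def
  set G5x := greedyStep (G5 k) G4 G5Vert.x with hG5def
  set G6 := greedyStep (G5 k) G5x G5Vert.p with hG6def
  -- values of G1
  have hG1Q : ∀ i : Fin k, G1 (G5Vert.Q i) = gfun β ((i : ℕ) + 1) := fun i => by
    rw [hQ1 i, if_pos i.2]
  have hG1p : G1 G5Vert.p = 0 := (hQ2 _ (fun i => by simp)).trans (hf₀n _ (by simp))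
  have hG1x : G1 G5Vert.x = 0 := (hQ2 _ (fun i => by simp)).trans (hf₀n _ (by simp))
  have hG1y : G1 G5Vert.y = 0 := (hQ2 _ (fun i => by simp)).trans (hf₀n _ (by simp))
  have hG1P : ∀ i : Fin (k-1), G1 (G5Vert.P i) = 0 :=
    fun i => (hQ2 _ (fun i' => by simp)).trans (hf₀n _ (by simp))
  -- step at z
  have hG2z : G2 G5Vert.z = β := by
    rw [hG2def, greedyStep_self,
      stepQ G1 G5Vert.z β
        (fun i => (adj_z _).2 (Or.inr (Or.inr ⟨i, rfl⟩)))
        (fun u hu hnQ => by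
          rw [adj_z] at hu
          rcases hu with rfl | ⟨i, rfl⟩ | ⟨i, rfl⟩
          · exact hG1y
          · exact hG1P i
          · exact absurd rfl (hnQ i))
        hG1Q]
    exact sInf_q hβ1 hβk
  have hG2ne : ∀ w : G5Vert k, w ≠ G5Vert.z → G2 w = G1 w :=
    fun w hw => greedyStep_ne _ _ hw
  -- the P clique
  obtain ⟨hP1, hP2⟩ := Pclique β hβ1 G2
    (fun n hn => by
      rw [hG2z, (hG2ne _ (by simp)).trans hG1p, (hG2ne _ (by simp)).trans hG1x,
        (hG2ne _ (by simp)).trans hG1y]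
      omega)
    (fun i => (hG2ne _ (by simp)).trans (hG1P i)) m hmk
  have hG3P : ∀ i : Fin (k-1), G3 (G5Vert.P i)
      = if (i : ℕ) < m then gfun β ((i : ℕ) + 1) else 0 := hP1
  have hG3z : G3 G5Vert.z = β := (hP2 _ (fun i => by simp)).trans hG2z
  have hG3x : G3 G5Vert.x = 0 :=
    (hP2 _ (fun i => by simp)).trans ((hG2ne _ (by simp)).trans hG1x)
  have hG3p : G3 G5Vert.p = 0 :=
    (hP2 _ (fun i => by simp)).trans ((hG2ne _ (by simp)).trans hG1p)
  -- step at y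
  have hG4y : G4 G5Vert.y = α := by
    rw [hG4def, greedyStep_self,
      stepP G3 G5Vert.y β β m hmk
        (fun i => (adj_y _).2 (Or.inr (Or.inr ⟨i, rfl⟩)))
        (fun u hu hnP => by
          rw [adj_y] at hu
          rcases hu with rfl | rfl | ⟨i, rfl⟩
          · exact Or.inl hG3x
          · exact Or.inr hG3z
          · exact absurd rfl (hnP i))
        (Or.inr ⟨G5Vert.z, (adj_y _).2 (Or.inr (Or.inl rfl)), hG3z⟩)
        hG3P,
      sInf_clique hβ1, hmdef]
    exact gfun_M hβ1 hα1 hαβ.symm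
  have hG4ne : ∀ w : G5Vert k, w ≠ G5Vert.y → G4 w = G3 w :=
    fun w hw => greedyStep_ne _ _ hw
  have hG4P : ∀ i : Fin (k-1), G4 (G5Vert.P i)
      = if (i : ℕ) < m then gfun β ((i : ℕ) + 1) else 0 :=
    fun i => (hG4ne _ (by simp)).trans (hG3P i)
  -- step at x
  have hG5xx : G5x G5Vert.x = cY β α := by
    rw [hG5def, greedyStep_self,
      stepP G4 G5Vert.x α β m hmk
        (fun i => (adj_x _).2 (Or.inr (Or.inr ⟨i, rfl⟩)))
        (fun u hu hnP => by
          rw [adj_x] at hu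
          rcases hu with rfl | rfl | ⟨i, rfl⟩
          · exact Or.inl ((hG4ne _ (by simp)).trans hG3p)
          · exact Or.inr hG4y
          · exact absurd rfl (hnP i))
        (Or.inr ⟨G5Vert.y, (adj_x _).2 (Or.inr (Or.inl rfl)), hG4y⟩)
        hG4P,
      hmdef]
    exact sInf_y hβ1 hα1 hαβ.symm
  have hG5ne : ∀ w : G5Vert k, w ≠ G5Vert.x → G5x w = G4 w :=
    fun w hw => greedyStep_ne _ _ hw
  have hG5P : ∀ i : Fin (k-1), G5x (G5Vert.P i)
      = if (i : ℕ) < m then gfun β ((i : ℕ) + 1) else 0 :=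
    fun i => (hG5ne _ (by simp)).trans (hG4P i)
  -- final segment does not touch p, and the step at p
  rw [greedyFrom_of_not_mem _ _ (by intro h; obtain ⟨i, -, hi⟩ := List.mem_map.1 h; simp at hi),
    hG6def, greedyStep_self,
    stepP G5x G5Vert.p (cY β α) β m hmk
      (fun i => (adj_p _).2 (Or.inr ⟨i, rfl⟩))
      (fun u hu hnP => by
        rw [adj_p] at hu
        rcases hu with rfl | ⟨i, rfl⟩
        · exact Or.inr hG5xx
        · exact absurd rfl (hnP i))
      (Or.inr ⟨G5Vert.x, (adj_p _).2 (Or.inl rfl), hG5xx⟩)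
      hG5P,
    hmdef]
  exact sInf_z hβ1 hα1 hαβ.symm

lemma mem_take_mapP {k m : ℕ} (w : G5Vert k) :
    w ∈ (List.map G5Vert.P (List.finRange (k-1))).take m
      ↔ ∃ i : Fin (k-1), (i:ℕ) < m ∧ w = G5Vert.P i := by
  rw [← List.map_take]
  simp only [List.mem_map, mem_take_finRange]
  constructor
  · rintro ⟨i, hi, rfl⟩; exact ⟨i, hi, rfl⟩
  · rintro ⟨i, hi, rfl⟩; exact ⟨i, hi, rfl⟩

lemma mem_drop_mapP {k m : ℕ} (w : G5Vert k) :
    w ∈ (List.map G5Vert.P (List.finRange (k-1))).drop m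
      ↔ ∃ i : Fin (k-1), m ≤ (i:ℕ) ∧ w = G5Vert.P i := by
  rw [← List.map_drop]
  simp only [List.mem_map, mem_drop_finRange]
  constructor
  · rintro ⟨i, hi, rfl⟩; exact ⟨i, hi, rfl⟩
  · rintro ⟨i, hi, rfl⟩; exact ⟨i, hi, rfl⟩

open G5Vert in
lemma order1 (k m : ℕ) (hk : 3 ≤ k) :
    IsConnectedOrder (G5 k) (G5Vert.p ::
      (((List.finRange (k-1)).take m).map G5Vert.P ++ [G5Vert.x, G5Vert.y, G5Vert.z]
        ++ ((List.finRange (k-1)).drop m).map G5Vert.P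
        ++ (List.finRange k).map G5Vert.Q ++ [G5Vert.q])) := by
  have hPinj : Function.Injective (G5Vert.P (k := k)) := fun a b h => by injection h
  have hQinj : Function.Injective (G5Vert.Q (k := k)) := fun a b h => by injection h
  have h1 : (((List.finRange (k-1)).map (G5Vert.P (k := k))).take m).Nodup := by
    rw [← List.map_take]
    exact ((List.take_sublist _ _).nodup (List.nodup_finRange _)).map hPinj
  have h2 : (((List.finRange (k-1)).map (G5Vert.P (k := k))).drop m).Nodup := by
    rw [← List.map_drop]
    exact ((List.drop_sublist _ _).nodup (List.nodup_finRange _)).map hPinj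
  have h3 : ((List.finRange k).map (G5Vert.Q (k := k))).Nodup :=
    (List.nodup_finRange _).map hQinj
  have hnd : (G5Vert.p ::
      (((List.finRange (k-1)).take m).map G5Vert.P ++ [G5Vert.x, G5Vert.y, G5Vert.z]
        ++ ((List.finRange (k-1)).drop m).map G5Vert.P
        ++ (List.finRange k).map G5Vert.Q ++ [G5Vert.q])).Nodup := by
    simp [List.nodup_append, List.nodup_cons, List.disjoint_left, List.mem_map,
      mem_take_mapP, mem_drop_mapP, h1, h2, h3]
    constructor
    · rintro a i hi rfl
      rintro b (⟨j, rfl⟩ | rfl) <;> simp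
    · rintro a i hi rfl
      refine ⟨by simp, by simp, by simp, fun b hb hh => ?_⟩
      rcases hb with ⟨j, hj, rfl⟩ | ⟨j, rfl⟩ | rfl
      · obtain rfl := hPinj hh
        omega
      · simp at hh
      · simp at hh
  refine ⟨hnd, ?_, ?_⟩
  · intro w
    cases w <;>
      simp [List.mem_append, List.mem_map, mem_take_mapP, mem_drop_mapP] <;>
      omega
  · intro i hi
    rcases hget : _root_.List.get _ i with _ | _ | _ | _ | _ | j | j
    case p =>
      exfalso
      have h0 : (0 : ℕ) < (G5Vert.p ::
          (((List.finRange (k-1)).take m).map G5Vert.P ++ [G5Vert.x, G5Vert.y, G5Vert.z]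
            ++ ((List.finRange (k-1)).drop m).map G5Vert.P
            ++ (List.finRange k).map G5Vert.Q ++ [G5Vert.q])).length := by simp
      have heq : i = ⟨0, h0⟩ := (List.Nodup.get_inj_iff hnd).1 hget
      rw [heq] at hi
      simp at hi
    case x =>
      obtain ⟨j', hj', hgj⟩ := earlier_mem (l₁ := [G5Vert.p]) (u := G5Vert.p)
        hnd rfl (by simp) (by simp) hget
      refine ⟨j', hj', ?_⟩
      rw [hgj]
      exact (adj_x (k := k) G5Vert.p).2 (Or.inl rfl)
    case y =>
      obtain ⟨j', hj', hgj⟩ := earlier_mem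
        (l₁ := G5Vert.p :: (((List.finRange (k-1)).take m).map G5Vert.P ++ [G5Vert.x]))
        (l₂ := [G5Vert.y, G5Vert.z] ++ ((List.finRange (k-1)).drop m).map G5Vert.P
          ++ (List.finRange k).map G5Vert.Q ++ [G5Vert.q])
        (u := G5Vert.x)
        hnd (by simp) (by simp) (by simp) hget
      refine ⟨j', hj', ?_⟩
      rw [hgj]
      exact (adj_y (k := k) G5Vert.x).2 (Or.inl rfl)
    case z =>
      obtain ⟨j', hj', hgj⟩ := earlier_mem
        (l₁ := G5Vert.p :: (((List.finRange (k-1)).take m).map G5Vert.P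
          ++ [G5Vert.x, G5Vert.y]))
        (l₂ := [G5Vert.z] ++ ((List.finRange (k-1)).drop m).map G5Vert.P
          ++ (List.finRange k).map G5Vert.Q ++ [G5Vert.q])
        (u := G5Vert.y)
        hnd (by simp) (by simp) (by simp) hget
      refine ⟨j', hj', ?_⟩
      rw [hgj]
      exact (adj_z (k := k) G5Vert.y).2 (Or.inl rfl)
    case q =>
      obtain ⟨j', hj', hgj⟩ := earlier_mem
        (l₁ := G5Vert.p :: (((List.finRange (k-1)).take m).map G5Vert.P
          ++ [G5Vert.x, G5Vert.y, G5Vert.z]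
          ++ ((List.finRange (k-1)).drop m).map G5Vert.P
          ++ (List.finRange k).map G5Vert.Q))
        (l₂ := [G5Vert.q])
        (u := G5Vert.Q ⟨0, by omega⟩)
        hnd (by simp) (by simp [List.mem_map]) (by simp) hget
      refine ⟨j', hj', ?_⟩
      rw [hgj]
      exact (adj_q (k := k) (G5Vert.Q ⟨0, by omega⟩)).2 ⟨_, rfl⟩
    case P =>
      obtain ⟨j', hj', hgj⟩ := earlier_mem (l₁ := [G5Vert.p]) (u := G5Vert.p)
        hnd rfl (by simp)
        (by
          simp [List.mem_append, List.mem_map, mem_take_mapP, mem_drop_mapP]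
          omega)
        hget
      refine ⟨j', hj', ?_⟩
      rw [hgj]
      exact (adj_P (k := k) j G5Vert.p).2 (Or.inl rfl)
    case Q =>
      obtain ⟨j', hj', hgj⟩ := earlier_mem
        (l₁ := G5Vert.p :: (((List.finRange (k-1)).take m).map G5Vert.P
          ++ [G5Vert.x, G5Vert.y, G5Vert.z]))
        (l₂ := ((List.finRange (k-1)).drop m).map G5Vert.P
          ++ (List.finRange k).map G5Vert.Q ++ [G5Vert.q])
        (u := G5Vert.z)
        hnd (by simp) (by simp) (by simp [List.mem_map]) hget
      refine ⟨j', hj', ?_⟩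
      rw [hgj]
      exact (adj_Q (k := k) j G5Vert.z).2 (Or.inl rfl)

open G5Vert in
lemma order2 (k m : ℕ) (hk : 3 ≤ k) :
    IsConnectedOrder (G5 k) (G5Vert.q ::
      ((List.finRange k).map G5Vert.Q ++ [G5Vert.z]
        ++ ((List.finRange (k-1)).take m).map G5Vert.P ++ [G5Vert.y, G5Vert.x, G5Vert.p]
        ++ ((List.finRange (k-1)).drop m).map G5Vert.P)) := by
  have hPinj : Function.Injective (G5Vert.P (k := k)) := fun a b h => by injection h
  have hQinj : Function.Injective (G5Vert.Q (k := k)) := fun a b h => by injection h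
  have h1 : (((List.finRange (k-1)).map (G5Vert.P (k := k))).take m).Nodup := by
    rw [← List.map_take]
    exact ((List.take_sublist _ _).nodup (List.nodup_finRange _)).map hPinj
  have h2 : (((List.finRange (k-1)).map (G5Vert.P (k := k))).drop m).Nodup := by
    rw [← List.map_drop]
    exact ((List.drop_sublist _ _).nodup (List.nodup_finRange _)).map hPinj
  have h3 : ((List.finRange k).map (G5Vert.Q (k := k))).Nodup :=
    (List.nodup_finRange _).map hQinj
  have hnd : (G5Vert.q ::
      ((List.finRange k).map G5Vert.Q ++ [G5Vert.z]
        ++ ((List.finRange (k-1)).take m).map G5Vert.P ++ [G5Vert.y, G5Vert.x, G5Vert.p]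
        ++ ((List.finRange (k-1)).drop m).map G5Vert.P)).Nodup := by
    simp [List.nodup_append, List.nodup_cons, List.disjoint_left, List.mem_map,
      mem_take_mapP, mem_drop_mapP, h1, h2, h3]
    refine ⟨?_, ?_⟩
    · rintro a i hi rfl
      refine ⟨by simp, by simp, by simp, fun b j hj hb hh => ?_⟩
      subst hb
      obtain rfl := hPinj hh
      omega
    · rintro a b (⟨j, -, rfl⟩ | rfl | rfl | rfl | ⟨j, -, rfl⟩) <;> simp
  refine ⟨hnd, ?_, ?_⟩
  · intro w
    cases w <;>
      simp [List.mem_append, List.mem_map, mem_take_mapP, mem_drop_mapP] <;>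
      omega
  · intro i hi
    rcases hget : _root_.List.get _ i with _ | _ | _ | _ | _ | j | j
    case q =>
      exfalso
      have h0 : (0 : ℕ) < (G5Vert.q ::
          ((List.finRange k).map G5Vert.Q ++ [G5Vert.z]
            ++ ((List.finRange (k-1)).take m).map G5Vert.P ++ [G5Vert.y, G5Vert.x, G5Vert.p]
            ++ ((List.finRange (k-1)).drop m).map G5Vert.P)).length := by simp
      have heq : i = ⟨0, h0⟩ := (List.Nodup.get_inj_iff hnd).1 hget
      rw [heq] at hi
      simp at hi
    case Q =>
      obtain ⟨j', hj', hgj⟩ := earlier_mem (l₁ := [G5Vert.q]) (u := G5Vert.q)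
        hnd rfl (by simp) (by simp [List.mem_map]) hget
      refine ⟨j', hj', ?_⟩
      rw [hgj]
      exact (adj_Q (k := k) j G5Vert.q).2 (Or.inr (Or.inl rfl))
    case z =>
      obtain ⟨j', hj', hgj⟩ := earlier_mem
        (l₁ := G5Vert.q :: (List.finRange k).map G5Vert.Q)
        (l₂ := [G5Vert.z] ++ ((List.finRange (k-1)).take m).map G5Vert.P
          ++ [G5Vert.y, G5Vert.x, G5Vert.p] ++ ((List.finRange (k-1)).drop m).map G5Vert.P)
        (u := G5Vert.Q ⟨0, by omega⟩)
        hnd (by simp) (by simp [List.mem_map]) (by simp) hget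
      refine ⟨j', hj', ?_⟩
      rw [hgj]
      exact (adj_z (k := k) (G5Vert.Q ⟨0, by omega⟩)).2 (Or.inr (Or.inr ⟨_, rfl⟩))
    case P =>
      obtain ⟨j', hj', hgj⟩ := earlier_mem
        (l₁ := G5Vert.q :: ((List.finRange k).map G5Vert.Q ++ [G5Vert.z]))
        (l₂ := ((List.finRange (k-1)).take m).map G5Vert.P
          ++ [G5Vert.y, G5Vert.x, G5Vert.p] ++ ((List.finRange (k-1)).drop m).map G5Vert.P)
        (u := G5Vert.z)
        hnd (by simp) (by simp)
        (by
          simp [List.mem_append, List.mem_map, mem_take_mapP, mem_drop_mapP]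
          omega)
        hget
      refine ⟨j', hj', ?_⟩
      rw [hgj]
      exact (adj_P (k := k) j G5Vert.z).2 (Or.inr (Or.inr (Or.inr (Or.inl rfl))))
    case y =>
      obtain ⟨j', hj', hgj⟩ := earlier_mem
        (l₁ := G5Vert.q :: ((List.finRange k).map G5Vert.Q ++ [G5Vert.z]))
        (l₂ := ((List.finRange (k-1)).take m).map G5Vert.P
          ++ [G5Vert.y, G5Vert.x, G5Vert.p] ++ ((List.finRange (k-1)).drop m).map G5Vert.P)
        (u := G5Vert.z)
        hnd (by simp) (by simp) (by simp) hget
      refine ⟨j', hj', ?_⟩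
      rw [hgj]
      exact (adj_y (k := k) G5Vert.z).2 (Or.inr (Or.inl rfl))
    case x =>
      obtain ⟨j', hj', hgj⟩ := earlier_mem
        (l₁ := G5Vert.q :: ((List.finRange k).map G5Vert.Q ++ [G5Vert.z]
          ++ ((List.finRange (k-1)).take m).map G5Vert.P ++ [G5Vert.y]))
        (l₂ := [G5Vert.x, G5Vert.p] ++ ((List.finRange (k-1)).drop m).map G5Vert.P)
        (u := G5Vert.y)
        hnd (by simp) (by simp) (by simp) hget
      refine ⟨j', hj', ?_⟩
      rw [hgj]
      exact (adj_x (k := k) G5Vert.y).2 (Or.inr (Or.inl rfl))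
    case p =>
      obtain ⟨j', hj', hgj⟩ := earlier_mem
        (l₁ := G5Vert.q :: ((List.finRange k).map G5Vert.Q ++ [G5Vert.z]
          ++ ((List.finRange (k-1)).take m).map G5Vert.P ++ [G5Vert.y, G5Vert.x]))
        (l₂ := [G5Vert.p] ++ ((List.finRange (k-1)).drop m).map G5Vert.P)
        (u := G5Vert.x)
        hnd (by simp) (by simp) (by simp) hget
      refine ⟨j', hj', ?_⟩
      rw [hgj]
      exact (adj_p (k := k) G5Vert.x).2 (Or.inl rfl)


theorem statement7 (k : ℕ) (hk : 3 ≤ k) (α β : ℕ)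
    (hα : α ∈ Finset.Icc 1 (k + 1)) (hβ : β ∈ Finset.Icc 1 (k + 1)) (hαβ : α ≠ β) :
    (∃ f : G5Vert k → ℕ, IsCGCFrom (G5 k) G5Vert.p α f ∧ f G5Vert.q = β) ∧
    (∃ f : G5Vert k → ℕ, IsCGCFrom (G5 k) G5Vert.q β f ∧ f G5Vert.p = α) := by
  rw [Finset.mem_Icc] at hα hβ
  constructor
  · exact ⟨_, ⟨_, order1 k (Mf α β) hk, rfl⟩,
      part1_val k α β hk hα.1 hα.2 hβ.1 hβ.2 hαβ⟩
  · exact ⟨_, ⟨_, order2 k (Mf β α) hk, rfl⟩,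
      part2_val k α β hk hα.1 hα.2 hβ.1 hβ.2 hαβ⟩
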